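/- Let Ω ⊆ ℝ² be a bounded domain (open and connected) with smooth boundary, and let g : ∂Ω → N be continuous and not homotopically trivial. Let Q : Ω̄ → S₀ be continuous with Q = g on ∂Ω. If Q(x) ≠ 0 and β(Q(x)) < 1 for every x ∈ Ω̄, then a contradiction follows; equivalently, every continuous Q : Ω̄ → S₀ with Q = g on ∂Ω which satisfies β(Q(x)) < 1 at every point where Q(x) ≠ 0 must vanish somewhere: min_{Ω̄} |Q| = 0. -/

import Mathlib

open Matrix Metric Set

noncomputable section

abbrev M3 : Type := Matrix (Fin 3) (Fin 3) ℝ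

abbrev E2 : Type := EuclideanSpace ℝ (Fin 2)

/-- The biaxiality parameter β(Q) = 1 − 6 (tr Q³)² / (tr Q²)³. -/
def beta (Q : M3) : ℝ := 1 - 6 * ((Q * Q * Q).trace) ^ 2 / ((Q * Q).trace) ^ 3

/-- The (rescaled) vacuum manifold N = { √(3/2)( n⊗n − (1/3)Id ) : |n| = 1 }. -/
def Nset : Set M3 :=
  {Q | ∃ n : Fin 3 → ℝ, (∑ i, n i ^ 2) = 1 ∧
    Q = Real.sqrt (3/2) • (vecMulVec n n - (1/3 : ℝ) • (1 : M3))}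

/-- An open set Ω ⊆ ℝ² has smooth boundary if near every boundary point it is the
sublevel set of a smooth local defining function with nonvanishing differential. -/
def HasSmoothBoundary (Ω : Set E2) : Prop :=
  ∀ x ∈ frontier Ω, ∃ (U : Set E2) (f : E2 → ℝ), IsOpen U ∧ x ∈ U ∧
    ContDiff ℝ (⊤ : ℕ∞) f ∧ (∀ y ∈ U, fderiv ℝ f y ≠ 0) ∧
    Ω ∩ U = {y ∈ U | f y < 0}

/-- g : ∂Ω → N is homotopically trivial if it admits a continuous extension Ω̄ → N. -/
def HomotopicallyTrivial (Ω : Set E2) (g : E2 → M3) : Prop :=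
  ∃ G : E2 → M3, ContinuousOn G (closure Ω) ∧ (∀ x ∈ closure Ω, G x ∈ Nset) ∧
    ∀ x ∈ frontier Ω, G x = g x

/-! ### Auxiliary algebraic lemmas -/

theorem auxCH (A : M3) (h : A.trace = 0) :
    A * A * A = ((A*A).trace/2) • A + A.det • (1 : M3) := by
  rw [Matrix.trace_fin_three] at h
  ext i j
  fin_cases i <;> fin_cases j <;>
    simp [Matrix.mul_apply, Fin.sum_univ_three, Matrix.det_fin_three, Matrix.trace_fin_three,
      Matrix.one_apply] <;>
    first
    | linear_combination (A 0 0 * A 0 0 + A 0 1 * A 1 0 + A 0 2 * A 2 0 - (A 0 0 + A 1 1 + A 2 2)/2 * A 0 0) * h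
    | linear_combination (A 0 0 * A 0 1 + A 0 1 * A 1 1 + A 0 2 * A 2 1 - (A 0 0 + A 1 1 + A 2 2)/2 * A 0 1) * h
    | linear_combination (A 0 0 * A 0 2 + A 0 1 * A 1 2 + A 0 2 * A 2 2 - (A 0 0 + A 1 1 + A 2 2)/2 * A 0 2) * h
    | linear_combination (A 1 0 * A 0 0 + A 1 1 * A 1 0 + A 1 2 * A 2 0 - (A 0 0 + A 1 1 + A 2 2)/2 * A 1 0) * h
    | linear_combination (A 1 0 * A 0 1 + A 1 1 * A 1 1 + A 1 2 * A 2 1 - (A 0 0 + A 1 1 + A 2 2)/2 * A 1 1) * h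
    | linear_combination (A 1 0 * A 0 2 + A 1 1 * A 1 2 + A 1 2 * A 2 2 - (A 0 0 + A 1 1 + A 2 2)/2 * A 1 2) * h
    | linear_combination (A 2 0 * A 0 0 + A 2 1 * A 1 0 + A 2 2 * A 2 0 - (A 0 0 + A 1 1 + A 2 2)/2 * A 2 0) * h
    | linear_combination (A 2 0 * A 0 1 + A 2 1 * A 1 1 + A 2 2 * A 2 1 - (A 0 0 + A 1 1 + A 2 2)/2 * A 2 1) * h
    | linear_combination (A 2 0 * A 0 2 + A 2 1 * A 1 2 + A 2 2 * A 2 2 - (A 0 0 + A 1 1 + A 2 2)/2 * A 2 2) * h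

theorem auxKeyM (A : M3) (l q e : ℝ)
    (hCH : A*A*A = q • A + e • (1:M3)) (hlam : l^3 = q*l + e) :
    (A*A + l•A + (l^2-q)•(1:M3)) * (A*A + l•A + (l^2-q)•(1:M3))
      = (3*l^2 - q) • (A*A + l•A + (l^2-q)•(1:M3)) := by
  have h4 : A*A*(A*A) = q•(A*A) + e•A := by
    calc A*A*(A*A) = (A*A*A)*A := by noncomm_ring
    _ = (q • A + e • (1:M3))*A := by rw [hCH]
    _ = q•(A*A) + e•A := by simp [add_mul, smul_mul_assoc]
  simp only [mul_add, add_mul, smul_mul_assoc, mul_smul_comm, mul_one, one_mul, smul_smul]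
  rw [show A*A*(A*A) = q•(A*A) + e•A from h4, show A*(A*A) = A*A*A from (mul_assoc A A A).symm, hCH]
  match_scalars
  · ring
  · linear_combination (-1)*hlam
  · linear_combination (-2*l)*hlam

theorem aux_rank_one_proj (P : M3) (hP : Pᵀ = P) (hid : P * P = P) (htr : P.trace = 1) :
    ∃ n : Fin 3 → ℝ, (∑ i, n i ^ 2) = 1 ∧ P = vecMulVec n n := by
  have hH : P.IsHermitian := by
    rw [Matrix.IsHermitian, Matrix.conjTranspose_eq_transpose_of_trivial]; exact hP
  set U : M3 := (Matrix.IsHermitian.eigenvectorUnitary hH : M3) with hU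
  set μ : Fin 3 → ℝ := hH.eigenvalues with hμ
  have hUU : star U * U = 1 := (Matrix.mem_unitaryGroup_iff').mp (Matrix.IsHermitian.eigenvectorUnitary hH).2
  have hUU' : U * star U = 1 := (Matrix.mem_unitaryGroup_iff).mp (Matrix.IsHermitian.eigenvectorUnitary hH).2
  have hsp : P = U * Matrix.diagonal μ * star U := by
    have h := hH.spectral_theorem
    have hofreal : (RCLike.ofReal ∘ μ : Fin 3 → ℝ) = μ := by funext i; simp [RCLike.ofReal]
    rwa [hofreal] at h
  have hsq : ∀ i, μ i * μ i = μ i := by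
    have h2 : U * (Matrix.diagonal μ * Matrix.diagonal μ) * star U
        = U * Matrix.diagonal μ * star U := by
      calc U * (Matrix.diagonal μ * Matrix.diagonal μ) * star U
          = (U * Matrix.diagonal μ * star U) * (U * Matrix.diagonal μ * star U) := by
            rw [show (U * Matrix.diagonal μ * star U) * (U * Matrix.diagonal μ * star U)
              = U * (Matrix.diagonal μ * ((star U * U) * Matrix.diagonal μ)) * star U by
                simp only [Matrix.mul_assoc]]
            rw [hUU, one_mul]
        _ = P := by rw [← hsp, hid]
        _ = U * Matrix.diagonal μ * star U := hsp
    have h3 : Matrix.diagonal μ * Matrix.diagonal μ = Matrix.diagonal μ := by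
      have h4 := congrArg (fun M => star U * M * U) h2
      simp only [Matrix.mul_assoc] at h4
      rw [hUU] at h4
      simp only [Matrix.mul_one] at h4
      simp only [← Matrix.mul_assoc] at h4
      rw [hUU] at h4
      simpa only [Matrix.one_mul] using h4
    intro i
    rw [Matrix.diagonal_mul_diagonal] at h3
    have h6 : (μ * μ) i = μ i := by
      have := congrArg (fun d => d i) (Matrix.diagonal_injective h3)
      simpa using this
    simpa using h6
  have htrμ : μ 0 + μ 1 + μ 2 = 1 := by
    have : P.trace = (Matrix.diagonal μ).trace := by
      rw [hsp, Matrix.trace_mul_cycle, hUU, Matrix.one_mul]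
    rw [htr] at this
    simpa [Matrix.trace_fin_three, Matrix.diagonal_apply, Fin.sum_univ_three] using this.symm
  have hcases : ∀ i, μ i = 0 ∨ μ i = 1 := by
    intro i
    have h := hsq i
    rcases mul_eq_mul_right_iff.mp (by linarith [h] : μ i * μ i = 1 * μ i) with h | h
    · right; linarith
    · left; exact h
  have hone : ∃ i : Fin 3, μ = fun j => if j = i then 1 else 0 := by
    rcases hcases 0 with h0 | h0 <;> rcases hcases 1 with h1 | h1 <;> rcases hcases 2 with h2 | h2
    · exfalso; rw [h0, h1, h2] at htrμ; norm_num at htrμ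
    · exact ⟨2, by funext j; fin_cases j <;> simp [h0, h1, h2]⟩
    · exact ⟨1, by funext j; fin_cases j <;> simp [h0, h1, h2]⟩
    · exfalso; rw [h0, h1, h2] at htrμ; norm_num at htrμ
    · exact ⟨0, by funext j; fin_cases j <;> simp [h0, h1, h2]⟩
    · exfalso; rw [h0, h1, h2] at htrμ; norm_num at htrμ
    · exfalso; rw [h0, h1, h2] at htrμ; norm_num at htrμ
    · exfalso; rw [h0, h1, h2] at htrμ; norm_num at htrμ
  obtain ⟨i, hi⟩ := hone
  refine ⟨fun j => U j i, ?_, ?_⟩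
  · have := congrFun (congrFun hUU i) i
    simpa [Matrix.mul_apply, Matrix.one_apply, Matrix.conjTranspose_apply, pow_two] using this
  · ext j k
    rw [hsp]
    simp only [Matrix.mul_apply, Matrix.diagonal_apply, Matrix.vecMulVec_apply, hi]
    simp [Matrix.conjTranspose_apply, Fin.sum_univ_three]

theorem aux_beta_bound (A : M3) (hP : Aᵀ = A) (htr : A.trace = 0) :
    6 * ((A*A*A).trace)^2 ≤ ((A*A).trace)^3 := by
  have hH : A.IsHermitian := by
    rw [Matrix.IsHermitian, Matrix.conjTranspose_eq_transpose_of_trivial]; exact hP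
  set U : M3 := (Matrix.IsHermitian.eigenvectorUnitary hH : M3) with hU
  set μ : Fin 3 → ℝ := hH.eigenvalues with hμ
  have hUU : star U * U = 1 := (Matrix.mem_unitaryGroup_iff').mp (Matrix.IsHermitian.eigenvectorUnitary hH).2
  have hsp : A = U * Matrix.diagonal μ * star U := by
    have h := hH.spectral_theorem
    have hofreal : (RCLike.ofReal ∘ μ : Fin 3 → ℝ) = μ := by funext i; simp [RCLike.ofReal]
    rwa [hofreal] at h
  have key : ∀ d : Fin 3 → ℝ, (U * Matrix.diagonal d * star U).trace = ∑ i, d i := by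
    intro d
    rw [Matrix.trace_mul_cycle, hUU, Matrix.one_mul, Matrix.trace_diagonal]
  have mulkey : ∀ d e : Fin 3 → ℝ, (U * Matrix.diagonal d * star U) * (U * Matrix.diagonal e * star U)
      = U * Matrix.diagonal (fun i => d i * e i) * star U := by
    intro d e
    rw [show (U * Matrix.diagonal d * star U) * (U * Matrix.diagonal e * star U)
      = U * (Matrix.diagonal d * ((star U * U) * Matrix.diagonal e)) * star U by
        simp only [Matrix.mul_assoc], hUU, Matrix.one_mul, Matrix.diagonal_mul_diagonal]
  have h1 : A.trace = ∑ i, μ i := by rw [hsp]; exact key μ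
  have h2 : (A*A).trace = ∑ i, (μ i)^2 := by
    rw [hsp, mulkey, key]
    exact Finset.sum_congr rfl fun i _ => (sq (μ i)).symm
  have h3 : (A*A*A).trace = ∑ i, (μ i)^3 := by
    rw [hsp, mulkey, mulkey, key]
    exact Finset.sum_congr rfl fun i _ => by ring
  rw [h2, h3]
  rw [h1] at htr
  simp only [Fin.sum_univ_three] at htr ⊢
  have hc : μ 2 = -μ 0 - μ 1 := by linarith
  rw [hc]
  nlinarith [mul_nonneg (sq_nonneg (μ 0 - μ 1)) (sq_nonneg (μ 0 * μ 1 + 2*(μ 0 + μ 1)^2))]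

/-! ### The top-eigenvalue function and eigenprojection -/

noncomputable def lam (A : M3) : ℝ :=
  2 * Real.sqrt ((A*A).trace / 6) *
    Real.cos (Real.arccos (Real.sqrt 6 * (A*A*A).trace / (Real.sqrt ((A*A).trace))^3) / 3)

theorem lam_cubic (A : M3) (hp2 : 0 < (A*A).trace)
    (hc1 : |Real.sqrt 6 * (A*A*A).trace / (Real.sqrt ((A*A).trace))^3| ≤ 1) :
    (lam A)^3 = ((A*A).trace/2) * lam A + (A*A*A).trace / 3 := by
  set p2 := (A*A).trace with hp2def
  set t3 := (A*A*A).trace with ht3def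
  set c := Real.sqrt 6 * t3 / (Real.sqrt p2)^3 with hcdef
  set r := Real.sqrt (p2/6) with hrdef
  set φ := Real.arccos c / 3 with hφdef
  have h6 : (0:ℝ) < 6 := by norm_num
  have hr2 : r^2 = p2/6 := Real.sq_sqrt (by positivity)
  have hrpos : 0 < r := Real.sqrt_pos.mpr (by positivity)
  have hcos3 : Real.cos (3*φ) = c := by
    rw [hφdef, mul_div_cancel₀ _ (by norm_num : (3:ℝ) ≠ 0)]
    exact Real.cos_arccos (neg_le_of_abs_le hc1) (le_of_abs_le hc1)
  have htriple : Real.cos (3*φ) = 4*(Real.cos φ)^3 - 3*Real.cos φ := Real.cos_three_mul φ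
  have hlam : lam A = 2*r*Real.cos φ := rfl
  have hsqrtp2 : Real.sqrt p2 = r * Real.sqrt 6 := by
    rw [hrdef, ← Real.sqrt_mul (by positivity) 6, div_mul_cancel₀ _ (ne_of_gt h6)]
  have hkey : 2*r^3*c = t3/3 := by
    have h63 : (Real.sqrt 6)^3 = 6 * Real.sqrt 6 := by
      rw [pow_succ, Real.sq_sqrt (by norm_num : (0:ℝ) ≤ 6)]
    rw [hcdef, hsqrtp2]
    field_simp
    ring_nf
    rw [Real.sq_sqrt (by norm_num : (0:ℝ) ≤ 6)]
  rw [hlam]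
  have hp2r : p2 = 6*r^2 := by rw [hr2]; ring
  have : (2*r*Real.cos φ)^3 - (p2/2)*(2*r*Real.cos φ) = 2*r^3*(4*(Real.cos φ)^3 - 3*Real.cos φ) := by
    rw [hp2r]; ring
  rw [← htriple, hcos3, hkey] at this
  linarith

theorem lam_sq_ge (A : M3) (hp2 : 0 < (A*A).trace)
    (hc0 : 0 ≤ Real.sqrt 6 * (A*A*A).trace / (Real.sqrt ((A*A).trace))^3) :
    (A*A).trace / 2 ≤ (lam A)^2 := by
  set p2 := (A*A).trace with hp2def
  set c := Real.sqrt 6 * (A*A*A).trace / (Real.sqrt p2)^3 with hcdef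
  set r := Real.sqrt (p2/6) with hrdef
  set φ := Real.arccos c / 3 with hφdef
  have hr2 : r^2 = p2/6 := Real.sq_sqrt (by positivity)
  have hφ0 : 0 ≤ φ := by
    rw [hφdef]
    have := Real.arccos_nonneg c
    linarith
  have hφle : φ ≤ Real.pi/6 := by
    rw [hφdef]
    have := (Real.arccos_le_pi_div_two (x := c)).mpr hc0
    linarith
  have hcosge : Real.sqrt 3 / 2 ≤ Real.cos φ := by
    have h1 : Real.cos (Real.pi/6) ≤ Real.cos φ := by
      apply Real.cos_le_cos_of_nonneg_of_le_pi hφ0 ?_ hφle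
      linarith [Real.pi_pos]
    rwa [Real.cos_pi_div_six] at h1
  have hlam : lam A = 2*r*Real.cos φ := rfl
  have h34 : (3:ℝ)/4 ≤ (Real.cos φ)^2 := by
    have h3 : (Real.sqrt 3)^2 = 3 := Real.sq_sqrt (by norm_num)
    nlinarith [Real.sqrt_nonneg 3]
  rw [hlam]
  have hp2r : p2 = 6*r^2 := by rw [hr2]; ring
  rw [hp2r]
  nlinarith [Real.sqrt_nonneg (p2/6)]

noncomputable def Pmat (A : M3) : M3 :=
  (3*(lam A)^2 - (A*A).trace/2)⁻¹ •
    (A*A + lam A • A + ((lam A)^2 - (A*A).trace/2) • (1:M3))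

theorem trace_sq_pos (A : M3) (hsym : Aᵀ = A) (hA : A ≠ 0) : 0 < (A*A).trace := by
  have hAt : ∀ i j, A j i = A i j := fun i j => by
    conv_lhs => rw [← hsym]
    rfl
  have h1 : (A*A).trace = ∑ i, ∑ j, (A i j)^2 := by
    simp only [Matrix.trace, Matrix.diag, Matrix.mul_apply]
    refine Finset.sum_congr rfl fun i _ => Finset.sum_congr rfl fun j _ => by
      rw [hAt i j]; ring
  rw [h1]
  obtain ⟨i, hi⟩ : ∃ i, A i ≠ 0 := by
    by_contra h
    push_neg at h
    exact hA (funext h)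
  obtain ⟨j, hj⟩ : ∃ j, A i j ≠ 0 := by
    by_contra h
    push_neg at h
    exact hi (funext h)
  have hterm : 0 < (A i j)^2 := by positivity
  have hle : (A i j)^2 ≤ ∑ j', (A i j')^2 :=
    Finset.single_le_sum (fun k _ => sq_nonneg (A i k)) (Finset.mem_univ j)
  have hle2 : ∑ j', (A i j')^2 ≤ ∑ i', ∑ j', (A i' j')^2 :=
    Finset.single_le_sum (fun k (_ : k ∈ Finset.univ) => Finset.sum_nonneg fun l _ => sq_nonneg (A k l))
      (Finset.mem_univ i)
  linarith

theorem cc_abs_le_one (A : M3) (hsym : Aᵀ = A) (htr : A.trace = 0) (hp2 : 0 < (A*A).trace) :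
    |Real.sqrt 6 * (A*A*A).trace / (Real.sqrt ((A*A).trace))^3| ≤ 1 := by
  set p2 := (A*A).trace with hp2def
  set t3 := (A*A*A).trace with ht3def
  have hbd : 6 * t3^2 ≤ p2^3 := aux_beta_bound A hsym htr
  have h6 : (Real.sqrt 6)^2 = 6 := Real.sq_sqrt (by norm_num)
  have hps : ((Real.sqrt p2)^3)^2 = p2^3 := by
    rw [← pow_mul, show 3*2 = 2*3 by norm_num, pow_mul, Real.sq_sqrt hp2.le]
  have hsq : (Real.sqrt 6 * t3 / (Real.sqrt p2)^3)^2 ≤ 1 := by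
    rw [div_pow, mul_pow, h6, hps]
    rw [div_le_one (by positivity)]
    exact hbd
  nlinarith [sq_abs (Real.sqrt 6 * t3 / (Real.sqrt p2)^3),
    abs_nonneg (Real.sqrt 6 * t3 / (Real.sqrt p2)^3)]

theorem D_pos (A : M3) (hsym : Aᵀ = A) (htr : A.trace = 0) (hA : A ≠ 0)
    (ht3 : 0 < (A*A*A).trace) :
    0 < 3*(lam A)^2 - (A*A).trace/2 := by
  have hp2 : 0 < (A*A).trace := trace_sq_pos A hsym hA
  have hc0 : 0 ≤ Real.sqrt 6 * (A*A*A).trace / (Real.sqrt ((A*A).trace))^3 := by positivity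
  have h := lam_sq_ge A hp2 hc0
  linarith

theorem Pmat_mem (A : M3) (hsym : Aᵀ = A) (htr : A.trace = 0) (hA : A ≠ 0)
    (ht3 : 0 < (A*A*A).trace) :
    Real.sqrt (3/2) • (Pmat A - (1/3:ℝ) • (1:M3)) ∈ Nset := by
  have hp2 : 0 < (A*A).trace := trace_sq_pos A hsym hA
  have hc0 : 0 ≤ Real.sqrt 6 * (A*A*A).trace / (Real.sqrt ((A*A).trace))^3 := by positivity
  have hc1 := cc_abs_le_one A hsym htr hp2
  have hlc := lam_cubic A hp2 hc1
  have hD := D_pos A hsym htr hA ht3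
  set p2 := (A*A).trace with hp2def
  set t3 := (A*A*A).trace with ht3def
  set l := lam A with hldef
  set D := 3*l^2 - p2/2 with hDdef
  have hdet : A.det = t3/3 := by
    have h := congrArg Matrix.trace (auxCH A htr)
    rw [Matrix.trace_add, Matrix.trace_smul, Matrix.trace_smul, htr, Matrix.trace_one] at h
    simp only [smul_eq_mul, mul_zero, zero_add, Fintype.card_fin] at h
    norm_num at h
    rw [ht3def]
    linarith [h]
  have hCH : A*A*A = (p2/2) • A + (t3/3) • (1:M3) := by
    rw [← hdet]
    exact auxCH A htr
  have hlam3 : l^3 = (p2/2)*l + t3/3 := hlc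
  have hM := auxKeyM A l (p2/2) (t3/3) hCH hlam3
  set M : M3 := A*A + l•A + (l^2-p2/2)•(1:M3) with hMdef
  have hPdef : Pmat A = D⁻¹ • M := rfl
  have hDne : D ≠ 0 := ne_of_gt hD
  have hPP : Pmat A * Pmat A = Pmat A := by
    rw [hPdef, Matrix.smul_mul, Matrix.mul_smul, hM, smul_smul, smul_smul]
    congr 1
    field_simp
    rw [hDdef]
    ring
  have hPT : (Pmat A)ᵀ = Pmat A := by
    rw [hPdef, Matrix.transpose_smul, hMdef]
    congr 1
    rw [Matrix.transpose_add, Matrix.transpose_add, Matrix.transpose_mul, hsym,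
      Matrix.transpose_smul, hsym, Matrix.transpose_smul, Matrix.transpose_one]
  have hPtr : (Pmat A).trace = 1 := by
    rw [hPdef, Matrix.trace_smul, hMdef, Matrix.trace_add, Matrix.trace_add,
      Matrix.trace_smul, Matrix.trace_smul, htr, Matrix.trace_one]
    simp only [smul_eq_mul, mul_zero, add_zero]
    rw [← hp2def]
    field_simp
    simp only [hDdef, Fintype.card_fin, Nat.cast_ofNat]; ring
  obtain ⟨n, hn, hPn⟩ := aux_rank_one_proj (Pmat A) hPT hPP hPtr
  exact ⟨n, hn, by rw [hPn]⟩

/-! ### Computations on the vacuum manifold -/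

theorem Nset_core (n : Fin 3 → ℝ) (hn : (∑ i, n i ^ 2) = 1) :
    (Real.sqrt (3/2) • (vecMulVec n n - (1/3:ℝ) • (1:M3))) *
      (Real.sqrt (3/2) • (vecMulVec n n - (1/3:ℝ) • (1:M3)))
      = (1/2:ℝ) • vecMulVec n n + (1/6:ℝ) • (1:M3) := by
  have hn' : n 0^2 + n 1^2 + n 2^2 = 1 := by
    simpa [Fin.sum_univ_three] using hn
  have hNN : vecMulVec n n * vecMulVec n n = vecMulVec n n := by
    ext i j
    simp only [Matrix.mul_apply, Matrix.vecMulVec_apply, Fin.sum_univ_three]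
    linear_combination (n i * n j) * hn'
  have hs2 : Real.sqrt (3/2) * Real.sqrt (3/2) = 3/2 :=
    Real.mul_self_sqrt (by norm_num)
  rw [smul_mul_smul_comm, hs2]
  simp only [sub_mul, mul_sub, Matrix.mul_smul, Matrix.smul_mul, one_mul, mul_one, hNN,
    smul_smul, smul_sub]
  module

theorem vecMulVec_trace (n : Fin 3 → ℝ) (hn : (∑ i, n i ^ 2) = 1) :
    (vecMulVec n n).trace = 1 := by
  have hn' : n 0^2 + n 1^2 + n 2^2 = 1 := by simpa [Fin.sum_univ_three] using hn
  simp only [Matrix.trace, Matrix.diag, Matrix.vecMulVec_apply, Fin.sum_univ_three]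
  linear_combination hn'

theorem Nset_trace_sq (n : Fin 3 → ℝ) (hn : (∑ i, n i ^ 2) = 1) :
    ((Real.sqrt (3/2) • (vecMulVec n n - (1/3:ℝ) • (1:M3))) *
      (Real.sqrt (3/2) • (vecMulVec n n - (1/3:ℝ) • (1:M3)))).trace = 1 := by
  rw [Nset_core n hn, Matrix.trace_add, Matrix.trace_smul, Matrix.trace_smul,
    vecMulVec_trace n hn, Matrix.trace_one]
  norm_num

theorem Nset_cube (n : Fin 3 → ℝ) (hn : (∑ i, n i ^ 2) = 1) :
    (Real.sqrt (3/2) • (vecMulVec n n - (1/3:ℝ) • (1:M3))) *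
      (Real.sqrt (3/2) • (vecMulVec n n - (1/3:ℝ) • (1:M3))) *
      (Real.sqrt (3/2) • (vecMulVec n n - (1/3:ℝ) • (1:M3)))
      = Real.sqrt (3/2) • ((1/2:ℝ) • vecMulVec n n - (1/18:ℝ) • (1:M3)) := by
  have hn' : n 0^2 + n 1^2 + n 2^2 = 1 := by simpa [Fin.sum_univ_three] using hn
  have hNN : vecMulVec n n * vecMulVec n n = vecMulVec n n := by
    ext i j
    simp only [Matrix.mul_apply, Matrix.vecMulVec_apply, Fin.sum_univ_three]
    linear_combination (n i * n j) * hn'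
  rw [Nset_core n hn]
  rw [Matrix.mul_smul]
  simp only [add_mul, sub_mul, mul_sub, Matrix.mul_smul, Matrix.smul_mul, one_mul, mul_one, hNN,
    smul_smul, smul_sub, smul_add]
  module

theorem Nset_trace_cube (n : Fin 3 → ℝ) (hn : (∑ i, n i ^ 2) = 1) :
    ((Real.sqrt (3/2) • (vecMulVec n n - (1/3:ℝ) • (1:M3))) *
      (Real.sqrt (3/2) • (vecMulVec n n - (1/3:ℝ) • (1:M3))) *
      (Real.sqrt (3/2) • (vecMulVec n n - (1/3:ℝ) • (1:M3)))).trace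
      = Real.sqrt (3/2) / 3 := by
  rw [Nset_cube n hn, Matrix.trace_smul, Matrix.trace_sub, Matrix.trace_smul, Matrix.trace_smul,
    vecMulVec_trace n hn, Matrix.trace_one]
  simp only [smul_eq_mul, Fintype.card_fin, Nat.cast_ofNat]
  ring

theorem lam_boundary (n : Fin 3 → ℝ) (hn : (∑ i, n i ^ 2) = 1) :
    lam (Real.sqrt (3/2) • (vecMulVec n n - (1/3:ℝ) • (1:M3))) = 2 * Real.sqrt (1/6) := by
  unfold lam
  rw [Nset_trace_sq n hn, Nset_trace_cube n hn]
  have h9 : Real.sqrt 6 * Real.sqrt (3/2) = 3 := by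
    rw [← Real.sqrt_mul (by norm_num : (0:ℝ) ≤ 6)]
    rw [show (6:ℝ) * (3/2) = 9 by norm_num]
    rw [show (9:ℝ) = 3^2 by norm_num, Real.sqrt_sq (by norm_num : (0:ℝ) ≤ 3)]
  have hc : Real.sqrt 6 * (Real.sqrt (3/2) / 3) / (Real.sqrt 1)^3 = 1 := by
    rw [Real.sqrt_one, one_pow, div_one,
      show Real.sqrt 6 * (Real.sqrt (3/2) / 3) = (Real.sqrt 6 * Real.sqrt (3/2))/3 by ring, h9]
    norm_num
  rw [hc, Real.arccos_one, zero_div, Real.cos_zero, mul_one]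

theorem Pmat_boundary (n : Fin 3 → ℝ) (hn : (∑ i, n i ^ 2) = 1) :
    Pmat (Real.sqrt (3/2) • (vecMulVec n n - (1/3:ℝ) • (1:M3))) = vecMulVec n n := by
  have hlam := lam_boundary n hn
  have hlam2 : (2 * Real.sqrt (1/6))^2 = 2/3 := by
    rw [mul_pow, Real.sq_sqrt (by norm_num : (0:ℝ) ≤ 1/6)]
    norm_num
  have hlams : (2 * Real.sqrt (1/6)) * Real.sqrt (3/2) = 1 := by
    rw [mul_assoc, ← Real.sqrt_mul (by norm_num : (0:ℝ) ≤ 1/6)]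
    rw [show (1:ℝ)/6 * (3/2) = 1/4 by norm_num]
    rw [show (1:ℝ)/4 = (1/2)^2 by norm_num, Real.sqrt_sq (by norm_num : (0:ℝ) ≤ 1/2)]
    norm_num
  unfold Pmat
  rw [hlam, hlam2, Nset_trace_sq n hn, Nset_core n hn]
  rw [show (2 * Real.sqrt (1/6)) • (Real.sqrt (3/2) • (vecMulVec n n - (1/3:ℝ) • (1:M3)))
    = ((2 * Real.sqrt (1/6)) * Real.sqrt (3/2)) • (vecMulVec n n - (1/3:ℝ) • (1:M3)) from
      (smul_smul _ _ _)]
  rw [hlams, one_smul]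
  rw [show (3:ℝ)*(2/3) - 1/2 = 3/2 by norm_num]
  rw [show ((2:ℝ)/3 - 1/2) = 1/6 by norm_num]
  match_scalars <;> norm_num


/-! ### Main theorem -/

/-- If Ω is a bounded domain with smooth boundary, g : ∂Ω → N is continuous and not
homotopically trivial, and Q : Ω̄ → S₀ is continuous, equal to g on ∂Ω, and satisfies
β(Q(x)) < 1 at every point where Q(x) ≠ 0, then Q must vanish somewhere in Ω̄. -/
theorem stmt12 (Ω : Set E2) (hΩ_open : IsOpen Ω) (hΩ_conn : IsConnected Ω)
    (hΩ_bdd : Bornology.IsBounded Ω) (hΩ_smooth : HasSmoothBoundary Ω)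
    (g : E2 → M3) (hg_cont : ContinuousOn g (frontier Ω))
    (hg_mem : ∀ x ∈ frontier Ω, g x ∈ Nset)
    (hg_nontriv : ¬ HomotopicallyTrivial Ω g)
    (Q : E2 → M3) (hQ_cont : ContinuousOn Q (closure Ω))
    (hQ_S0 : ∀ x ∈ closure Ω, (Q x)ᵀ = Q x ∧ (Q x).trace = 0)
    (hQ_bd : ∀ x ∈ frontier Ω, Q x = g x)
    (hQ_beta : ∀ x ∈ closure Ω, Q x ≠ 0 → beta (Q x) < 1) :
    ∃ x ∈ closure Ω, Q x = 0 := by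
  by_contra hcon
  push_neg at hcon
  have hsub : frontier Ω ⊆ closure Ω := frontier_subset_closure
  have hsym : ∀ x ∈ closure Ω, (Q x)ᵀ = Q x := fun x hx => (hQ_S0 x hx).1
  have htr0 : ∀ x ∈ closure Ω, (Q x).trace = 0 := fun x hx => (hQ_S0 x hx).2
  have hp2 : ∀ x ∈ closure Ω, 0 < ((Q x)*(Q x)).trace := fun x hx =>
    trace_sq_pos _ (hsym x hx) (hcon x hx)
  have ht3ne : ∀ x ∈ closure Ω, ((Q x)*(Q x)*(Q x)).trace ≠ 0 := by
    intro x hx h0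
    have hb := hQ_beta x hx (hcon x hx)
    unfold beta at hb
    rw [h0] at hb
    norm_num at hb
  have hfr : (frontier Ω).Nonempty := by
    rcases Set.eq_empty_or_nonempty (frontier Ω) with h | h
    · exfalso
      have hclopen : IsClopen Ω := isClopen_iff_frontier_eq_empty.mpr h
      have huniv : Ω = Set.univ := hclopen.eq_univ hΩ_conn.nonempty
      rw [huniv] at hΩ_bdd
      exact NormedSpace.unbounded_univ ℝ E2 hΩ_bdd
    · exact h
  obtain ⟨x0, hx0⟩ := hfr
  obtain ⟨n0, hn0, hg0⟩ := hg_mem x0 hx0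
  have ht30 : ((Q x0)*(Q x0)*(Q x0)).trace = Real.sqrt (3/2)/3 := by
    rw [hQ_bd x0 hx0, hg0]
    exact Nset_trace_cube n0 hn0
  have hQQ : ContinuousOn (fun x => Q x * Q x) (closure Ω) := hQ_cont.mul hQ_cont
  have hQQQ : ContinuousOn (fun x => Q x * Q x * Q x) (closure Ω) := hQQ.mul hQ_cont
  have htrc : Continuous (fun A : M3 => A.trace) := continuous_id.matrix_trace
  have hp2c : ContinuousOn (fun x => ((Q x)*(Q x)).trace) (closure Ω) :=
    htrc.comp_continuousOn hQQ
  have ht3c : ContinuousOn (fun x => ((Q x)*(Q x)*(Q x)).trace) (closure Ω) :=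
    htrc.comp_continuousOn hQQQ
  have ht3pos : ∀ x ∈ closure Ω, 0 < ((Q x)*(Q x)*(Q x)).trace := by
    intro x hx
    by_contra hle
    push_neg at hle
    have hlt : ((Q x)*(Q x)*(Q x)).trace < 0 := lt_of_le_of_ne hle (ht3ne x hx)
    have hpre : IsPreconnected (closure Ω) := hΩ_conn.isPreconnected.closure
    have hIcc := hpre.intermediate_value hx (hsub hx0) ht3c
    have h0mem : (0:ℝ) ∈ Icc (((Q x)*(Q x)*(Q x)).trace) (((Q x0)*(Q x0)*(Q x0)).trace) := by
      constructor
      · exact hlt.le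
      · rw [ht30]
        positivity
    obtain ⟨z, hz, hz0⟩ := hIcc h0mem
    exact ht3ne z hz hz0
  apply hg_nontriv
  refine ⟨fun x => Real.sqrt (3/2) • (Pmat (Q x) - (1/3:ℝ) • (1:M3)), ?_, ?_, ?_⟩
  · -- continuity
    have hDne : ∀ x ∈ closure Ω, 3*(lam (Q x))^2 - ((Q x)*(Q x)).trace/2 ≠ 0 := fun x hx =>
      ne_of_gt (D_pos _ (hsym x hx) (htr0 x hx) (hcon x hx) (ht3pos x hx))
    have hsqc : ContinuousOn (fun x => Real.sqrt (((Q x)*(Q x)).trace)) (closure Ω) :=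
      Real.continuous_sqrt.comp_continuousOn hp2c
    have hdenne : ∀ x ∈ closure Ω, (Real.sqrt (((Q x)*(Q x)).trace))^3 ≠ 0 := by
      intro x hx
      have h := hp2 x hx
      positivity
    have hccc : ContinuousOn (fun x => Real.sqrt 6 * ((Q x)*(Q x)*(Q x)).trace /
        (Real.sqrt (((Q x)*(Q x)).trace))^3) (closure Ω) :=
      (continuousOn_const.mul ht3c).div (hsqc.pow 3) hdenne
    have hlamc : ContinuousOn (fun x => lam (Q x)) (closure Ω) := by
      simp only [lam]
      exact (continuousOn_const.mul
          (Real.continuous_sqrt.comp_continuousOn (hp2c.div_const 6))).mul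
        (Real.continuous_cos.comp_continuousOn
          ((Real.continuous_arccos.comp_continuousOn hccc).div_const 3))
    have hMc : ContinuousOn (fun x => Q x * Q x + lam (Q x) • Q x +
        ((lam (Q x))^2 - ((Q x)*(Q x)).trace/2) • (1:M3)) (closure Ω) :=
      (hQQ.add (hlamc.smul hQ_cont)).add
        (((hlamc.pow 2).sub (hp2c.div_const 2)).smul continuousOn_const)
    have hPc : ContinuousOn (fun x => Pmat (Q x)) (closure Ω) := by
      simp only [Pmat]
      exact (((continuousOn_const.mul (hlamc.pow 2)).sub (hp2c.div_const 2)).inv₀ hDne).smul hMc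
    exact (continuousOn_const : ContinuousOn (fun _ => Real.sqrt (3/2)) (closure Ω)).smul (hPc.sub continuousOn_const)
  · intro x hx
    exact Pmat_mem (Q x) (hsym x hx) (htr0 x hx) (hcon x hx) (ht3pos x hx)
  · intro x hx
    obtain ⟨n, hn, hgx⟩ := hg_mem x hx
    show Real.sqrt (3/2) • (Pmat (Q x) - (1/3:ℝ) • (1:M3)) = g x
    rw [hQ_bd x hx, hgx, Pmat_boundary n hn, ← hgx]
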